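/- Karamata's integration theorem (divergent case): if g : [t₀, ∞) → (0, ∞) is locally bounded, measurable, and regularly varying with index α > −1 (i.e. g(tx)/g(t) → x^α as t → ∞ for every x > 0), then ∫_{t₀}^t g(s) ds ~ t·g(t)/(α+1) as t → ∞. -/

import Mathlib

open Filter MeasureTheory Real ENNReal

namespace Karamata

noncomputable def k (g : ℝ → ℝ) (α : ℝ) (u : ℝ) : ℝ := Real.log (g (Real.exp u)) - α * u

lemma k_meas {g : ℝ → ℝ} {α : ℝ} (hmeas : Measurable g) : Measurable (k g α) := by
  unfold k
  exact (Real.measurable_log.comp (hmeas.comp Real.continuous_exp.measurable)).sub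
    (measurable_const.mul measurable_id)

lemma k_pointwise {g : ℝ → ℝ} {t₀ α : ℝ} (ht₀ : 0 < t₀) (hpos : ∀ s, t₀ ≤ s → 0 < g s)
    (hrv : ∀ x : ℝ, 0 < x → Tendsto (fun t => g (t * x) / g t) atTop (nhds (x ^ α)))
    (v : ℝ) : Tendsto (fun u => k g α (u + v) - k g α u) atTop (nhds 0) := by
  have h1 : Tendsto (fun u : ℝ => g (Real.exp u * Real.exp v) / g (Real.exp u)) atTop
      (nhds (Real.exp v ^ α)) := (hrv (Real.exp v) (Real.exp_pos v)).comp Real.tendsto_exp_atTop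
  have hpos' : (0:ℝ) < Real.exp v ^ α := Real.rpow_pos_of_pos (Real.exp_pos v) α
  have h2 : Tendsto (fun u : ℝ => Real.log (g (Real.exp u * Real.exp v) / g (Real.exp u)) - α * v)
      atTop (nhds 0) := by
    have := ((Real.continuousAt_log (ne_of_gt hpos')).tendsto.comp h1).sub_const (α * v)
    simpa [Real.log_rpow (Real.exp_pos v), Real.log_exp, mul_comm] using this
  refine h2.congr' ?_
  filter_upwards [eventually_ge_atTop (Real.log t₀), eventually_ge_atTop (Real.log t₀ - v)]
    with u hu1 hu2
  have he1 : t₀ ≤ Real.exp u := by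
    calc t₀ = Real.exp (Real.log t₀) := (Real.exp_log ht₀).symm
    _ ≤ Real.exp u := Real.exp_le_exp.mpr hu1
  have he2 : t₀ ≤ Real.exp (u + v) := by
    calc t₀ = Real.exp (Real.log t₀) := (Real.exp_log ht₀).symm
    _ ≤ Real.exp (u + v) := Real.exp_le_exp.mpr (by linarith)
  have : Real.exp u * Real.exp v = Real.exp (u + v) := (Real.exp_add u v).symm
  rw [this, Real.log_div (ne_of_gt (hpos _ he2)) (ne_of_gt (hpos _ he1))]
  unfold k
  ring

lemma k_bounded {g : ℝ → ℝ} {t₀ α : ℝ} (ht₀ : 0 < t₀) (hmeas : Measurable g)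
    (hpos : ∀ s, t₀ ≤ s → 0 < g s)
    (hrv : ∀ x : ℝ, 0 < x → Tendsto (fun t => g (t * x) / g t) atTop (nhds (x ^ α))) :
    ∃ U M : ℝ, ∀ u, U ≤ u → ∀ v ∈ Set.Icc (-1:ℝ) 0, |k g α (u + v) - k g α u| ≤ M := by
  set K := k g α with hK
  by_contra hcon
  push_neg at hcon
  have hseq : ∀ n : ℕ, ∃ p : ℝ × ℝ, (n:ℝ) ≤ p.1 ∧ p.2 ∈ Set.Icc (-1:ℝ) 0 ∧
      (n:ℝ) < |K (p.1 + p.2) - K p.1| := by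
    intro n
    obtain ⟨u, hu, v, hv, h⟩ := hcon n n
    exact ⟨(u, v), hu, hv, h⟩
  choose p hu hv hlarge using hseq
  set u : ℕ → ℝ := fun n => (p n).1
  set v : ℕ → ℝ := fun n => (p n).2
  -- the two families of sets
  set A : ℕ → Set ℝ := fun n => Set.Icc (-3:ℝ) 3 ∩
    ⋂ (m : ℕ) (_ : n ≤ m), {w | |K (u m + v m) - K (u m + v m - w)| ≤ 1} with hA
  set C : ℕ → Set ℝ := fun n => Set.Icc (-3:ℝ) 3 ∩
    ⋂ (m : ℕ) (_ : n ≤ m), {z | |K (u m + z) - K (u m)| ≤ 1} with hC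
  have hKmeas : Measurable K := k_meas hmeas
  have hAmeas : ∀ n, MeasurableSet (A n) := by
    intro n
    refine measurableSet_Icc.inter (MeasurableSet.iInter fun m => MeasurableSet.iInter fun _ => ?_)
    exact measurableSet_le ((measurable_const.sub
      (hKmeas.comp (measurable_const.sub measurable_id))).abs) measurable_const
  have hCmeas : ∀ n, MeasurableSet (C n) := by
    intro n
    refine measurableSet_Icc.inter (MeasurableSet.iInter fun m => MeasurableSet.iInter fun _ => ?_)
    exact measurableSet_le (((hKmeas.comp (measurable_const.add measurable_id)).sub
      measurable_const).abs) measurable_const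
  have hAmono : Monotone A := by
    intro a b hab w hw
    refine ⟨hw.1, Set.mem_iInter₂.2 fun m hm => Set.mem_iInter₂.1 hw.2 m (hab.trans hm)⟩
  have hCmono : Monotone C := by
    intro a b hab w hw
    refine ⟨hw.1, Set.mem_iInter₂.2 fun m hm => Set.mem_iInter₂.1 hw.2 m (hab.trans hm)⟩
  have habs : ∀ᶠ x in nhds (0:ℝ), |x| ≤ 1 := by
    have h1 : Set.Icc (-1:ℝ) 1 ∈ nhds (0:ℝ) := Icc_mem_nhds (by norm_num) (by norm_num)
    filter_upwards [h1] with x hx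
    rwa [abs_le]
  have hvm : ∀ m, -1 ≤ v m ∧ v m ≤ 0 := fun m => ⟨(hv m).1, (hv m).2⟩
  have hum : ∀ m : ℕ, (m:ℝ) ≤ u m := hu
  -- unions cover Icc
  have hAunion : ⋃ n, A n = Set.Icc (-3:ℝ) 3 := by
    apply Set.Subset.antisymm
    · exact Set.iUnion_subset fun n => Set.inter_subset_left
    · intro w hw
      have htend : Tendsto (fun m : ℕ => u m + v m - w) atTop atTop := by
        refine tendsto_atTop_mono (f := fun m : ℕ => (m:ℝ) + (-1 - w)) (fun m => ?_)
          (tendsto_atTop_add_const_right _ (-1 - w) tendsto_natCast_atTop_atTop)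
        show (m:ℝ) + (-1 - w) ≤ u m + v m - w
        have h1 := (hvm m).1
        have h2 := hum m
        linarith
      have h0 := (k_pointwise ht₀ hpos hrv w).comp htend
      have h1 : ∀ᶠ m : ℕ in atTop, |K (u m + v m - w + w) - K (u m + v m - w)| ≤ 1 :=
        h0.eventually habs
      obtain ⟨n, hn⟩ := eventually_atTop.1 h1
      refine Set.mem_iUnion.2 ⟨n, hw, Set.mem_iInter₂.2 fun m hm => ?_⟩
      have := hn m hm
      rw [sub_add_cancel] at this
      exact this
  have hCunion : ⋃ n, C n = Set.Icc (-3:ℝ) 3 := by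
    apply Set.Subset.antisymm
    · exact Set.iUnion_subset fun n => Set.inter_subset_left
    · intro z hz
      have htend : Tendsto u atTop atTop := by
        apply tendsto_atTop_mono hum tendsto_natCast_atTop_atTop
      have h0 := (k_pointwise ht₀ hpos hrv z).comp htend
      have h1 : ∀ᶠ m : ℕ in atTop, |K (u m + z) - K (u m)| ≤ 1 := h0.eventually habs
      obtain ⟨n, hn⟩ := eventually_atTop.1 h1
      exact Set.mem_iUnion.2 ⟨n, hz, Set.mem_iInter₂.2 fun m hm => hn m hm⟩
  have hvol6 : volume (Set.Icc (-3:ℝ) 3) = 6 := by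
    rw [Real.volume_Icc]
    norm_num
  -- find N with both measures > 5
  have hAten : Tendsto (fun n => volume (A n)) atTop (nhds (volume (Set.Icc (-3:ℝ) 3))) := by
    rw [← hAunion]
    exact tendsto_measure_iUnion_atTop hAmono
  have hCten : Tendsto (fun n => volume (C n)) atTop (nhds (volume (Set.Icc (-3:ℝ) 3))) := by
    rw [← hCunion]
    exact tendsto_measure_iUnion_atTop hCmono
  have h56 : (5:ℝ≥0∞) < volume (Set.Icc (-3:ℝ) 3) := by rw [hvol6]; norm_num
  obtain ⟨N₁, hN₁⟩ := (hAten.eventually (eventually_gt_nhds h56)).exists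
  obtain ⟨N₂, hN₂⟩ := (hCten.eventually (eventually_gt_nhds h56)).exists
  set N := max N₁ N₂
  have hAN : (5:ℝ≥0∞) < volume (A N) := hN₁.trans_le (measure_mono (hAmono (le_max_left _ _)))
  have hCN : (5:ℝ≥0∞) < volume (C N) := hN₂.trans_le (measure_mono (hCmono (le_max_right _ _)))
  -- the contradiction index
  set m := max N 3 with hm
  set B : Set ℝ := (fun w => v m - w) ⁻¹' (C N) with hB
  have hvolB : volume B = volume (C N) := by
    have : (fun w : ℝ => v m - w) = (fun x : ℝ => v m + x) ∘ (fun w : ℝ => -w) := by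
      funext w; simp [sub_eq_add_neg]
    rw [hB, this, Set.preimage_comp, Measure.measure_preimage_neg, measure_preimage_add]
  have hBsub : B ⊆ Set.Icc (-4:ℝ) 3 := by
    intro w hw
    have h1 : v m - w ∈ Set.Icc (-3:ℝ) 3 := (Set.inter_subset_left) hw
    have := (hvm m).1; have := (hvm m).2
    constructor <;> [linarith [h1.2]; linarith [h1.1]]
  have hvol7 : volume (Set.Icc (-4:ℝ) 3) = 7 := by rw [Real.volume_Icc]; norm_num
  -- A N ∩ B is nonempty
  have hne : (A N ∩ B).Nonempty := by
    apply nonempty_of_measure_ne_zero (μ := volume)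
    intro h0
    have hu7 : volume (A N ∪ B) ≤ 7 := by
      rw [← hvol7]
      apply measure_mono
      intro x hx
      rcases hx with hx | hx
      · have := hx.1; exact ⟨by linarith [this.1], this.2⟩
      · exact hBsub hx
    have hBmeas : MeasurableSet B := by
      rw [hB]
      exact (hCmeas N).preimage (show Measurable (fun w : ℝ => v m - w) from
        measurable_const.sub measurable_id)
    have hkey := measure_union_add_inter (μ := volume) (A N) hBmeas
    rw [h0, add_zero] at hkey
    rw [hkey, hvolB] at hu7
    have : (10:ℝ≥0∞) < volume (A N) + volume (C N) := by
      calc (10:ℝ≥0∞) = 5 + 5 := by norm_num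
      _ < volume (A N) + volume (C N) := by
          exact ENNReal.add_lt_add hAN hCN
    have h107 : (10:ℝ≥0∞) < 7 := this.trans_le hu7
    norm_num at h107
  obtain ⟨w, hwA, hwB⟩ := hne
  have hmN : N ≤ m := le_max_left _ _
  have e1 : |K (u m + v m) - K (u m + v m - w)| ≤ 1 := Set.mem_iInter₂.1 hwA.2 m hmN
  have e2 : |K (u m + (v m - w)) - K (u m)| ≤ 1 := Set.mem_iInter₂.1 hwB.2 m hmN
  have e3 : u m + (v m - w) = u m + v m - w := by ring
  rw [e3] at e2
  have e4 : |K (u m + v m) - K (u m)| ≤ 2 := by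
    calc |K (u m + v m) - K (u m)|
        ≤ |K (u m + v m) - K (u m + v m - w)| + |K (u m + v m - w) - K (u m)| := abs_sub_le _ _ _
      _ ≤ 2 := by linarith
  have e5 : (m:ℝ) < 2 := lt_of_lt_of_le (hlarge m) e4
  have e6 : (3:ℝ) ≤ (m:ℝ) := by
    have : (3:ℕ) ≤ m := le_max_right _ _
    exact_mod_cast this
  linarith

lemma k_potter {g : ℝ → ℝ} {t₀ α : ℝ} (ht₀ : 0 < t₀) (hmeas : Measurable g)
    (hpos : ∀ s, t₀ ≤ s → 0 < g s)
    (hrv : ∀ x : ℝ, 0 < x → Tendsto (fun t => g (t * x) / g t) atTop (nhds (x ^ α)))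
    {ε : ℝ} (hε : 0 < ε) :
    ∃ U C : ℝ, 0 < C ∧ ∀ p v : ℝ, v ≤ 0 → U ≤ p + v → U ≤ p →
      |k g α (p + v) - k g α p| ≤ C + ε * (-v) := by
  obtain ⟨U₀, M, hM⟩ := k_bounded ht₀ hmeas hpos hrv
  have habs : ∀ᶠ x in nhds (0:ℝ), |x| ≤ ε := by
    have h1 : Set.Icc (-ε) ε ∈ nhds (0:ℝ) := Icc_mem_nhds (by linarith) hε
    filter_upwards [h1] with x hx
    rwa [abs_le]
  obtain ⟨U₁, hU₁⟩ := eventually_atTop.1 ((k_pointwise ht₀ hpos hrv (-1)).eventually habs)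
  set U := max U₀ U₁ with hU
  have chain : ∀ n : ℕ, ∀ p : ℝ, U ≤ p - n → |k g α (p - n) - k g α p| ≤ n * ε := by
    intro n
    induction n with
    | zero => intro p _; simp
    | succ n ih =>
      intro p hp
      have hpn : U ≤ p - n := by
        push_cast at hp ⊢
        linarith
      have e1 : |k g α ((p - n) + (-1)) - k g α (p - n)| ≤ ε :=
        hU₁ (p - n) (le_trans (le_max_right _ _) hpn)
      have e2 : (p - n) + (-1 : ℝ) = p - (n + 1 : ℕ) := by push_cast; ring
      rw [e2] at e1
      calc |k g α (p - (n+1:ℕ)) - k g α p|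
          ≤ |k g α (p - (n+1:ℕ)) - k g α (p - n)| + |k g α (p - n) - k g α p| :=
            abs_sub_le _ _ _
        _ ≤ ε + n * ε := add_le_add e1 (ih p hpn)
        _ = (n+1:ℕ) * ε := by push_cast; ring
  refine ⟨U, |M| + 1, by positivity, fun p v hv hpv hp => ?_⟩
  set n : ℕ := ⌊-v⌋₊ with hn
  have hn1 : (n:ℝ) ≤ -v := Nat.floor_le (by linarith)
  have hn2 : -v < n + 1 := Nat.lt_floor_add_one _
  have hpn : U ≤ p - n := by linarith
  have e2 : |k g α (p - n) - k g α p| ≤ n * ε := chain n p hpn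
  have e1 : |k g α ((p - n) + (v + n)) - k g α (p - n)| ≤ M := by
    refine hM (p - n) (le_trans (le_max_left _ _) hpn) (v + n) ⟨by linarith, by linarith⟩
  have e3 : (p - n) + (v + n) = p + v := by ring
  rw [e3] at e1
  have e4 : |k g α (p + v) - k g α p| ≤ M + n * ε := by
    calc |k g α (p + v) - k g α p|
        ≤ |k g α (p + v) - k g α (p - n)| + |k g α (p - n) - k g α p| := abs_sub_le _ _ _
      _ ≤ M + n * ε := add_le_add e1 e2
  have e5 : n * ε ≤ (-v) * ε := mul_le_mul_of_nonneg_right hn1 hε.le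
  have e6 : M ≤ |M| := le_abs_self M
  calc |k g α (p + v) - k g α p| ≤ M + n * ε := e4
    _ ≤ |M| + 1 + ε * (-v) := by rw [mul_comm ε]; linarith

lemma g_potter {g : ℝ → ℝ} {t₀ α : ℝ} (ht₀ : 0 < t₀) (hα : -1 < α) (hmeas : Measurable g)
    (hpos : ∀ s, t₀ ≤ s → 0 < g s)
    (hrv : ∀ x : ℝ, 0 < x → Tendsto (fun t => g (t * x) / g t) atTop (nhds (x ^ α))) :
    ∃ T D : ℝ, max t₀ 1 ≤ T ∧ 0 < D ∧ ∀ t u : ℝ, T ≤ t → 0 < u → u ≤ 1 → T ≤ t * u →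
      g (t * u) / g t ≤ D * u ^ ((α-1)/2) := by
  have hε : (0:ℝ) < (1 + α)/2 := by linarith
  obtain ⟨U, C, hC, hUC⟩ := k_potter ht₀ hmeas hpos hrv hε
  refine ⟨max (max t₀ 1) (Real.exp U), Real.exp C, le_max_left _ _, Real.exp_pos C,
    fun t u ht hu hu1 htu => ?_⟩
  have hT1 : (1:ℝ) ≤ max (max t₀ 1) (Real.exp U) :=
    le_trans (le_max_right t₀ 1) (le_max_left _ _)
  have ht0 : (0:ℝ) < t := lt_of_lt_of_le (by linarith) ht
  have htu0 : (0:ℝ) < t * u := mul_pos ht0 hu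
  have ht₀t : t₀ ≤ t := le_trans (le_trans (le_max_left t₀ 1) (le_max_left _ _)) ht
  have ht₀tu : t₀ ≤ t * u := le_trans (le_trans (le_max_left t₀ 1) (le_max_left _ _)) htu
  have hUt : U ≤ Real.log t := by
    rw [← Real.log_exp U]
    exact Real.log_le_log (Real.exp_pos U) (le_trans (le_max_right _ _) ht)
  have hUtu : U ≤ Real.log (t * u) := by
    rw [← Real.log_exp U]
    exact Real.log_le_log (Real.exp_pos U) (le_trans (le_max_right _ _) htu)
  have hlogu : Real.log u ≤ 0 := Real.log_nonpos hu.le hu1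
  have hlm : Real.log (t * u) = Real.log t + Real.log u := Real.log_mul (ne_of_gt ht0) (ne_of_gt hu)
  have hkey := hUC (Real.log t) (Real.log u) hlogu (by rw [← hlm]; exact hUtu) hUt
  have hkval : k g α (Real.log t + Real.log u) - k g α (Real.log t)
      = Real.log (g (t * u)) - Real.log (g t) - α * Real.log u := by
    unfold k
    rw [← hlm, Real.exp_log htu0, Real.exp_log ht0, hlm]
    ring
  rw [hkval] at hkey
  have h2 : Real.log (g (t * u)) - Real.log (g t) ≤ C + ((α-1)/2) * Real.log u := by
    have := (abs_le.1 hkey).2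
    have heq : (α - 1)/2 = α - (1+α)/2 := by ring
    rw [heq]
    linarith
  have h3 : g (t * u) / g t = Real.exp (Real.log (g (t * u)) - Real.log (g t)) := by
    rw [Real.exp_sub, Real.exp_log (hpos _ ht₀tu), Real.exp_log (hpos _ ht₀t)]
  rw [h3]
  calc Real.exp (Real.log (g (t * u)) - Real.log (g t))
      ≤ Real.exp (C + ((α-1)/2) * Real.log u) := Real.exp_le_exp.2 h2
    _ = Real.exp C * u ^ ((α-1)/2) := by
        rw [Real.exp_add, Real.rpow_def_of_pos hu, mul_comm (Real.log u)]

lemma g_bounds {g : ℝ → ℝ} {t₀ α : ℝ} (ht₀ : 0 < t₀) (hα : -1 < α) (hmeas : Measurable g)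
    (hpos : ∀ s, t₀ ≤ s → 0 < g s)
    (hbdd : ∀ b, t₀ ≤ b → ∃ C, ∀ s ∈ Set.Icc t₀ b, g s ≤ C)
    (hrv : ∀ x : ℝ, 0 < x → Tendsto (fun t => g (t * x) / g t) atTop (nhds (x ^ α))) :
    ∃ T D : ℝ, max t₀ 1 ≤ T ∧ 0 < D ∧
      (∀ t u : ℝ, T ≤ t → t₀ / t < u → u ≤ 1 → g (t * u) / g t ≤ D * u ^ ((α-1)/2)) ∧
      Tendsto (fun t => t * g t) atTop atTop := by
  obtain ⟨T, D, hT, hD, hP⟩ := g_potter ht₀ hα hmeas hpos hrv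
  set β := (α-1)/2 with hβ
  have hβ1 : (0:ℝ) < β + 1 := by rw [hβ]; linarith
  have hT1 : (1:ℝ) ≤ T := le_trans (le_max_right t₀ 1) hT
  have hT₀ : t₀ ≤ T := le_trans (le_max_left t₀ 1) hT
  have hT0 : (0:ℝ) < T := lt_of_lt_of_le one_pos hT1
  have hgT : 0 < g T := hpos T hT₀
  set c₀ := g T / D with hc₀
  have hc₀0 : 0 < c₀ := div_pos hgT hD
  -- lower bound for g
  have hglow : ∀ t, T ≤ t → c₀ * (t / T) ^ β ≤ g t := by
    intro t ht
    have ht0 : (0:ℝ) < t := lt_of_lt_of_le hT0 ht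
    have htT : t * (T / t) = T := by field_simp
    have key := hP t (T / t) ht (div_pos hT0 ht0) ((div_le_one ht0).2 ht) (by rw [htT])
    rw [htT] at key
    have hgt : 0 < g t := hpos t (le_trans hT₀ ht)
    have h1 : g T ≤ D * (T / t) ^ β * g t := (div_le_iff₀ hgt).1 key
    have hPpos : (0:ℝ) < (T / t) ^ β := Real.rpow_pos_of_pos (div_pos hT0 ht0) β
    have hQpos : (0:ℝ) < (t / T) ^ β := Real.rpow_pos_of_pos (div_pos ht0 hT0) β
    have hPQ : (T / t) ^ β * (t / T) ^ β = 1 := by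
      rw [← Real.mul_rpow (by positivity) (by positivity)]
      rw [show (T / t) * (t / T) = 1 by field_simp]
      exact Real.one_rpow β
    rw [hc₀, div_mul_eq_mul_div, div_le_iff₀ hD]
    calc g T * (t / T) ^ β ≤ D * (T / t) ^ β * g t * (t / T) ^ β :=
          mul_le_mul_of_nonneg_right h1 hQpos.le
      _ = D * g t * ((T / t) ^ β * (t / T) ^ β) := by ring
      _ = g t * D := by rw [hPQ]; ring
  -- tendsto t * g t atTop
  have htg : Tendsto (fun t => t * g t) atTop atTop := by
    have h1 : Tendsto (fun t : ℝ => (t / T) ^ (β + 1)) atTop atTop :=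
      (tendsto_rpow_atTop hβ1).comp (tendsto_id.atTop_div_const hT0)
    have h2 : Tendsto (fun t : ℝ => (c₀ * T) * (t / T) ^ (β + 1)) atTop atTop :=
      h1.const_mul_atTop (by positivity)
    apply tendsto_atTop_mono' atTop ?_ h2
    filter_upwards [eventually_ge_atTop T] with t ht
    have ht0 : (0:ℝ) < t := lt_of_lt_of_le hT0 ht
    have heq : (c₀ * T) * (t / T) ^ (β + 1) = t * (c₀ * (t / T) ^ β) := by
      rw [Real.rpow_add_one (ne_of_gt (div_pos ht0 hT0))]
      field_simp
    rw [heq]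
    exact mul_le_mul_of_nonneg_left (hglow t ht) ht0.le
  -- domination
  obtain ⟨CT, hCT⟩ := hbdd T hT₀
  set CT' := max CT 1 with hCT'
  have hCT'0 : (0:ℝ) < CT' := lt_of_lt_of_le one_pos (le_max_right _ _)
  set m₀ := min ((t₀ / T) ^ β) 1 with hm₀
  have hm₀0 : (0:ℝ) < m₀ := lt_min (Real.rpow_pos_of_pos (div_pos ht₀ hT0) β) one_pos
  set D₂ := CT' / (c₀ * m₀) with hD₂
  have hD₂0 : (0:ℝ) < D₂ := div_pos hCT'0 (by positivity)
  refine ⟨T, max D D₂, hT, lt_of_lt_of_le hD (le_max_left _ _), fun t u ht hu hu1 => ?_, htg⟩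
  have ht0 : (0:ℝ) < t := lt_of_lt_of_le hT0 ht
  have hu0 : (0:ℝ) < u := lt_of_le_of_lt (by positivity) hu
  have huβ : (0:ℝ) < u ^ β := Real.rpow_pos_of_pos hu0 β
  rcases le_or_gt T (t * u) with htu | htu
  · calc g (t * u) / g t ≤ D * u ^ β := hP t u ht hu0 hu1 htu
      _ ≤ max D D₂ * u ^ β := mul_le_mul_of_nonneg_right (le_max_left _ _) huβ.le
  · -- small case : t₀ < t*u < T
    have ht₀tu : t₀ < t * u := by
      rw [div_lt_iff₀ ht0] at hu
      linarith [hu, mul_comm u t]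
    have hgtu : g (t * u) ≤ CT' := le_trans (hCT (t * u) ⟨ht₀tu.le, htu.le⟩) (le_max_left _ _)
    have hgt : c₀ * (t / T) ^ β ≤ g t := hglow t ht
    have hgt0 : 0 < g t := hpos t (le_trans hT₀ ht)
    have hden : (0:ℝ) < c₀ * (t / T) ^ β := by positivity
    have step1 : g (t * u) / g t ≤ CT' / (c₀ * (t / T) ^ β) := by
      apply div_le_div₀ (le_of_lt hCT'0) hgtu hden hgt
    have hmain : m₀ ≤ (t / T) ^ β * u ^ β := by
      have htuT : (t * u / T) ^ β = (t / T) ^ β * u ^ β := by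
        rw [← Real.mul_rpow (by positivity) hu0.le]
        congr 1
        ring
      rw [← htuT]
      rcases le_or_gt 0 β with hβ0 | hβ0
      · calc m₀ ≤ (t₀ / T) ^ β := min_le_left _ _
          _ ≤ (t * u / T) ^ β := Real.rpow_le_rpow (by positivity) (by gcongr) hβ0
      · calc m₀ ≤ 1 := min_le_right _ _
          _ = (1:ℝ) ^ β := (Real.one_rpow β).symm
          _ ≤ (t * u / T) ^ β := Real.rpow_le_rpow_of_nonpos (by positivity)
              ((div_le_one hT0).2 htu.le) hβ0.le
    have step2 : CT' / (c₀ * (t / T) ^ β) ≤ D₂ * u ^ β := by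
      rw [div_le_iff₀ hden]
      have h2 : CT' = D₂ * c₀ * m₀ := by
        rw [hD₂]
        field_simp
      calc CT' = D₂ * c₀ * m₀ := h2
        _ ≤ D₂ * c₀ * ((t / T) ^ β * u ^ β) :=
            mul_le_mul_of_nonneg_left hmain (by positivity)
        _ = D₂ * u ^ β * (c₀ * (t / T) ^ β) := by ring
    calc g (t * u) / g t ≤ D₂ * u ^ β := le_trans step1 step2
      _ ≤ max D D₂ * u ^ β := mul_le_mul_of_nonneg_right (le_max_right _ _) huβ.le

end Karamata

open Karamata Filter

/-- Karamata's integration theorem, divergent case: if `g` is positive, measurable and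
locally bounded on `[t₀, ∞)` and regularly varying with index `α > −1`, then
`∫_{t₀}^t g(s) ds ~ t·g(t)/(α+1)` as `t → ∞`. -/
theorem stmt_17 (g : ℝ → ℝ) (t₀ : ℝ) (ht₀ : 0 < t₀) (α : ℝ) (hα : -1 < α)
    (hmeas : Measurable g) (hpos : ∀ s, t₀ ≤ s → 0 < g s)
    (hbdd : ∀ b, t₀ ≤ b → ∃ C, ∀ s ∈ Set.Icc t₀ b, g s ≤ C)
    (hrv : ∀ x : ℝ, 0 < x →
      Tendsto (fun t => g (t * x) / g t) atTop (nhds (x ^ α))) :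
    Tendsto (fun t => (∫ s in t₀..t, g s) / (t * g t / (α + 1))) atTop (nhds 1) := by
  obtain ⟨T, D, hT, hD, hdom, htg⟩ := g_bounds ht₀ hα hmeas hpos hbdd hrv
  set β := (α - 1)/2 with hβ
  have hβ1 : (-1:ℝ) < β := by rw [hβ]; linarith
  have hT1 : (1:ℝ) ≤ T := le_trans (le_max_right t₀ 1) hT
  have hT₀ : t₀ ≤ T := le_trans (le_max_left t₀ 1) hT
  have hT0 : (0:ℝ) < T := lt_of_lt_of_le one_pos hT1
  have hα1 : α + 1 ≠ 0 := by linarith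
  set f : ℝ → ℝ := (Set.Ioc (0:ℝ) 1).indicator (fun u => u ^ α) with hf
  set bound : ℝ → ℝ := (Set.Ioc (0:ℝ) 1).indicator (fun u => D * u ^ β) with hbnd
  set F : ℝ → ℝ → ℝ := fun t => (Set.Ioc (t₀/t) 1).indicator (fun u => g (t*u) / g t) with hF
  -- integrability of the bound
  have hbound_int : Integrable bound volume := by
    have h1 : IntervalIntegrable (fun x : ℝ => x ^ β) volume 0 1 :=
      intervalIntegral.intervalIntegrable_rpow' hβ1
    have h2 : IntegrableOn (fun x : ℝ => x ^ β) (Set.Ioc 0 1) volume := by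
      rwa [intervalIntegrable_iff_integrableOn_Ioc_of_le zero_le_one] at h1
    have h3 : IntegrableOn (fun x : ℝ => D * x ^ β) (Set.Ioc 0 1) volume := h2.const_mul D
    rw [hbnd]
    exact h3.integrable_indicator measurableSet_Ioc
  -- measurability
  have hmeasF : ∀ᶠ t in atTop, AEStronglyMeasurable (F t) volume := by
    filter_upwards with t
    exact (((hmeas.comp (measurable_const_mul t)).div_const (g t)).indicator
      measurableSet_Ioc).aestronglyMeasurable
  -- domination
  have hbd : ∀ᶠ t in atTop, ∀ᵐ u : ℝ, ‖F t u‖ ≤ bound u := by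
    filter_upwards [eventually_ge_atTop T] with t ht
    apply ae_of_all
    intro u
    have ht0 : (0:ℝ) < t := lt_of_lt_of_le hT0 ht
    by_cases hu : u ∈ Set.Ioc (t₀/t) 1
    · have hu0 : (0:ℝ) < u := lt_of_le_of_lt (by positivity) hu.1
      have htu : t₀ < t * u := by
        have := (div_lt_iff₀ ht0).1 hu.1
        linarith [mul_comm u t]
      have hFtu : F t u = g (t*u)/g t := by simp only [hF]; exact Set.indicator_of_mem hu _
      have hb : bound u = D * u ^ β := by
        rw [hbnd]; exact Set.indicator_of_mem (Set.mem_Ioc.mpr ⟨hu0, hu.2⟩) _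
      rw [hFtu, hb, Real.norm_eq_abs, abs_of_nonneg
        (div_nonneg (hpos _ htu.le).le (hpos t (le_trans hT₀ ht)).le)]
      exact hdom t u ht hu.1 hu.2
    · simp only [hF]
      rw [Set.indicator_of_notMem hu]
      simp only [norm_zero]
      rw [hbnd]
      apply Set.indicator_nonneg
      intro x hx
      have hx0 : (0:ℝ) < x := hx.1
      positivity
  -- pointwise limit
  have hlim : ∀ᵐ u : ℝ, Tendsto (fun t => F t u) atTop (nhds (f u)) := by
    apply ae_of_all
    intro u
    by_cases hu : u ∈ Set.Ioc (0:ℝ) 1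
    · have hval : f u = u ^ α := by rw [hf]; exact Set.indicator_of_mem hu _
      rw [hval]
      apply (hrv u hu.1).congr'
      filter_upwards [eventually_gt_atTop (t₀ / u), eventually_gt_atTop 0] with t ht ht0
      have h1 : t₀ / t < u := by
        rw [div_lt_iff₀ ht0]
        rw [div_lt_iff₀ hu.1] at ht
        linarith [mul_comm u t]
      simp only [hF]
      exact (Set.indicator_of_mem (Set.mem_Ioc.mpr ⟨h1, hu.2⟩)
        (fun u => g (t * u) / g t)).symm
    · have hval : f u = 0 := by rw [hf]; exact Set.indicator_of_notMem hu _
      rw [hval]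
      apply tendsto_const_nhds.congr'
      filter_upwards [eventually_ge_atTop (max T 1)] with t ht
      have ht0 : (0:ℝ) < t := lt_of_lt_of_le one_pos (le_trans (le_max_right _ _) ht)
      have : u ∉ Set.Ioc (t₀/t) 1 := by
        intro hmem
        exact hu (Set.mem_Ioc.mpr ⟨lt_trans (by positivity) hmem.1, hmem.2⟩)
      simp only [hF]
      exact (Set.indicator_of_notMem this (fun u => g (t * u) / g t)).symm
  -- DCT
  have hDCT : Tendsto (fun t => ∫ u, F t u) atTop (nhds (∫ u, f u)) :=
    tendsto_integral_filter_of_dominated_convergence bound hmeasF hbd hbound_int hlim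
  -- value of the limit integral
  have hIf : ∫ u, f u = 1 / (α + 1) := by
    rw [hf, MeasureTheory.integral_indicator measurableSet_Ioc,
      ← intervalIntegral.integral_of_le zero_le_one, integral_rpow (Or.inl hα),
      Real.one_rpow, Real.zero_rpow hα1]
    norm_num
  rw [hIf] at hDCT
  -- relate the two expressions
  have hev : (fun t => (α+1) * ∫ u, F t u) =ᶠ[atTop]
      (fun t => (∫ s in t₀..t, g s) / (t * g t / (α + 1))) := by
    filter_upwards [eventually_ge_atTop T] with t ht
    have ht0 : (0:ℝ) < t := lt_of_lt_of_le hT0 ht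
    have hgt : (0:ℝ) < g t := hpos t (le_trans hT₀ ht)
    have h01 : t₀ / t ≤ 1 := by
      rw [div_le_one ht0]
      exact le_trans hT₀ ht
    have step_a : ∫ u, F t u = ∫ u in Set.Ioc (t₀/t) 1, g (t*u) / g t := by
      simp only [hF]
      exact MeasureTheory.integral_indicator measurableSet_Ioc
    have step_b : ∫ u in Set.Ioc (t₀/t) 1, g (t*u) / g t = ∫ u in (t₀/t)..1, g (t*u) / g t :=
      (intervalIntegral.integral_of_le h01).symm
    have step_c : ∫ u in (t₀/t)..1, g (t*u) / g t = (∫ u in (t₀/t)..1, g (t*u)) / g t :=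
      intervalIntegral.integral_div _ _
    have step_d : ∫ u in (t₀/t)..1, g (t*u) = t⁻¹ • ∫ s in (t * (t₀/t))..(t*1), g s :=
      intervalIntegral.integral_comp_mul_left g (ne_of_gt ht0)
    have htt₀ : t * (t₀/t) = t₀ := by field_simp
    rw [htt₀, mul_one] at step_d
    rw [step_a, step_b, step_c, step_d]
    rw [smul_eq_mul]
    field_simp
  exact Tendsto.congr' hev (by
    have := hDCT.const_mul (α+1)
    rwa [mul_one_div, div_self hα1] at this)
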